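/- Let N > 0 and T > 0 be reals, and let Q(s) = N/(s + (1−p)/p) denote the average number of messages transmitted per time slot under the threshold-s policy. Suppose the feasible set S = { s ∈ ℤ : 1 ≤ s ≤ M−1 and Q(s) ≤ T } is nonempty. Then the minimum of A over S is attained at the smallest element of S, and this smallest element equals max(1, ⌈N/T − (1−p)/p⌉). -/

import Mathlib

open Finset

/-- Expected age of the threshold-`s` aging-control policy: the mean of the
stationary age distribution of the threshold-`s` chain. -/
noncomputable def Aage (M : ℕ) (p : ℝ) (s : ℕ) : ℝ :=
  ((s : ℝ) + (1 - p) / p)⁻¹ *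
    ((∑ i ∈ Finset.Icc 1 s, (i : ℝ))
      + (∑ i ∈ Finset.Icc (s + 1) (M - 1), (i : ℝ) * (1 - p) ^ (i - s))
      + (M : ℝ) * (1 - p) ^ (M - s) / p)

/-- Tail part of the numerator of `Aage`. -/
noncomputable def Dtail (M : ℕ) (p : ℝ) (s : ℕ) : ℝ :=
  (∑ i ∈ Finset.Icc (s + 1) (M - 1), (i : ℝ) * (1 - p) ^ (i - s))
    + (M : ℝ) * (1 - p) ^ (M - s) / p

lemma Aage_eq (M : ℕ) (p : ℝ) (s : ℕ) :
    Aage M p s = ((s : ℝ) + (1 - p) / p)⁻¹ *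
      ((∑ i ∈ Finset.Icc 1 s, (i : ℝ)) + Dtail M p s) := by
  unfold Aage Dtail; ring

lemma Dtail_rec (M : ℕ) (p : ℝ) (s : ℕ) (hsM : s + 1 ≤ M - 1) :
    Dtail M p s = (1 - p) * ((s : ℝ) + 1) + (1 - p) * Dtail M p (s + 1) := by
  have h21 : s + 1 + 1 = s + 2 := rfl
  have hins : Finset.Icc (s + 1) (M - 1)
      = insert (s + 1) (Finset.Icc (s + 2) (M - 1)) := by
    rw [← Finset.Ioc_insert_left hsM, ← Finset.Icc_add_one_left_eq_Ioc, h21]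
  have hnot : s + 1 ∉ Finset.Icc (s + 2) (M - 1) := by
    simp
  have hsum : (∑ i ∈ Finset.Icc (s + 2) (M - 1), (i : ℝ) * (1 - p) ^ (i - s))
      = (1 - p) * ∑ i ∈ Finset.Icc (s + 2) (M - 1),
          (i : ℝ) * (1 - p) ^ (i - (s + 1)) := by
    rw [Finset.mul_sum]
    refine Finset.sum_congr rfl fun i hi => ?_
    have h2 : s + 2 ≤ i := (Finset.mem_Icc.mp hi).1
    have he : i - s = (i - (s + 1)) + 1 := by omega
    rw [he, pow_succ]; ring
  have hpow : (1 - p) ^ (M - s) = (1 - p) ^ (M - (s + 1)) * (1 - p) := by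
    rw [← pow_succ]; congr 1; omega
  unfold Dtail
  rw [hins, Finset.sum_insert hnot, hsum, hpow, h21, Nat.add_sub_cancel_left]
  push_cast
  ring

lemma Dtail_lb (M : ℕ) (p : ℝ) (hM : 2 ≤ M) (hp : 0 < p) (hp1 : p < 1) :
    ∀ k t, M - 1 - t = k → t ≤ M - 1 → (t : ℝ) * (1 - p) ≤ p * Dtail M p t := by
  intro k
  induction k with
  | zero =>
    intro t hk ht
    have ht' : t = M - 1 := by omega
    subst ht'
    unfold Dtail
    have hIcc : Finset.Icc (M - 1 + 1) (M - 1) = ∅ := by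
      rw [Finset.Icc_eq_empty]; omega
    have hMs : M - (M - 1) = 1 := by omega
    rw [hIcc, hMs, Finset.sum_empty, pow_one]
    have hcancel : p * (0 + (M : ℝ) * (1 - p) / p) = (M : ℝ) * (1 - p) := by
      field_simp; ring
    rw [hcancel]
    have hle : ((M - 1 : ℕ) : ℝ) ≤ (M : ℝ) := by
      exact_mod_cast Nat.sub_le M 1
    nlinarith
  | succ k ih =>
    intro t hk ht
    have h1 : t + 1 ≤ M - 1 := by omega
    have IH := ih (t + 1) (by omega) (by omega)
    rw [Dtail_rec M p t h1]
    push_cast at IH ⊢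
    nlinarith [IH, mul_le_mul_of_nonneg_left IH (show (0:ℝ) ≤ 1 - p by linarith)]

lemma key_ineq (p c D' Ts sR : ℝ) (hp : 0 < p) (hp1 : p < 1) (hc : p * c = 1 - p)
    (hs : 1 ≤ sR) (hTs0 : 0 ≤ Ts) (hTs : Ts ≤ sR * sR) (hD0 : 0 ≤ D')
    (hDlb : (sR + 1) * (1 - p) ≤ p * D') :
    (Ts + ((1 - p) * (sR + 1) + (1 - p) * D')) * ((sR + 1) + c)
      ≤ (Ts + (sR + 1) + D') * (sR + c) := by
  have e1 : p * c * D' = (1 - p) * D' := by rw [hc]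
  have e2 : p * c * (sR + 1) = (1 - p) * (sR + 1) := by rw [hc]
  have e3 : p * c * Ts = (1 - p) * Ts := by rw [hc]
  have h4 : sR * ((sR + 1) * (1 - p)) ≤ sR * (p * D') :=
    mul_le_mul_of_nonneg_left hDlb (by linarith)
  nlinarith [e1, e2, e3, h4, hTs, hs, hp, hTs0]

lemma Aage_step (M : ℕ) (p : ℝ) (s : ℕ) (hM : 2 ≤ M) (hp : 0 < p) (hp1 : p < 1)
    (hs : 1 ≤ s) (hsM : s + 1 ≤ M - 1) :
    Aage M p s ≤ Aage M p (s + 1) := by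
  have hq : 0 < 1 - p := by linarith
  have hc0 : 0 < (1 - p) / p := div_pos hq hp
  have hs1 : (1 : ℝ) ≤ (s : ℝ) := by exact_mod_cast hs
  have ha : (0:ℝ) < (s : ℝ) + (1 - p) / p := by linarith
  have hb : (0:ℝ) < ((s + 1 : ℕ) : ℝ) + (1 - p) / p := by push_cast; linarith
  have hDlb := Dtail_lb M p hM hp hp1 (M - 1 - (s + 1)) (s + 1) rfl hsM
  have hD0 : 0 ≤ Dtail M p (s + 1) := by
    nlinarith [hDlb, hp, hs1]
  have hsum1 : (∑ i ∈ Finset.Icc 1 (s + 1), (i : ℝ))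
      = (∑ i ∈ Finset.Icc 1 s, (i : ℝ)) + ((s : ℝ) + 1) := by
    rw [Finset.sum_Icc_succ_top (by omega : 1 ≤ s + 1)]
    push_cast; ring
  have hTs0 : 0 ≤ ∑ i ∈ Finset.Icc 1 s, (i : ℝ) :=
    Finset.sum_nonneg fun i _ => by positivity
  have hTsub : (∑ i ∈ Finset.Icc 1 s, (i : ℝ)) ≤ (s : ℝ) * s := by
    calc (∑ i ∈ Finset.Icc 1 s, (i : ℝ))
        ≤ (Finset.Icc 1 s).card • (s : ℝ) :=
          Finset.sum_le_card_nsmul _ _ _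
            (fun i hi => by exact_mod_cast (Finset.mem_Icc.mp hi).2)
      _ = (s : ℝ) * s := by
          rw [Nat.card_Icc, nsmul_eq_mul]; push_cast; ring_nf
  rw [Aage_eq M p s, Aage_eq M p (s + 1), Dtail_rec M p s hsM, hsum1,
    inv_mul_eq_div, inv_mul_eq_div, div_le_div_iff₀ ha hb]
  have hc : p * ((1 - p) / p) = 1 - p := by field_simp
  have hcast : ((s + 1 : ℕ) : ℝ) = (s : ℝ) + 1 := by push_cast; ring
  rw [hcast]
  have := key_ineq p ((1 - p) / p) (Dtail M p (s + 1))
    (∑ i ∈ Finset.Icc 1 s, (i : ℝ)) (s : ℝ) hp hp1 hc hs1 hTs0 hTsub hD0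
    (by push_cast at hDlb ⊢; linarith)
  linarith [this]

lemma Aage_mono (M : ℕ) (p : ℝ) (hM : 2 ≤ M) (hp : 0 < p) (hp1 : p < 1) :
    ∀ s t : ℕ, 1 ≤ s → s ≤ t → t ≤ M - 1 → Aage M p s ≤ Aage M p t := by
  intro s t hs hst
  induction t, hst using Nat.le_induction with
  | base => intro _; exact le_refl _
  | succ t hst ih =>
    intro ht
    exact le_trans (ih (by omega))
      (Aage_step M p t hM hp hp1 (le_trans hs hst) ht)

theorem publisher_problem_solution (M : ℕ) (p N T : ℝ)
    (hM : 2 ≤ M) (hp : 0 < p) (hp1 : p < 1) (hN : 0 < N) (hT : 0 < T)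
    (hne : {s : ℕ | 1 ≤ s ∧ s ≤ M - 1 ∧
      N / ((s : ℝ) + (1 - p) / p) ≤ T}.Nonempty) :
    ∃ s₀ : ℕ,
      IsLeast {s : ℕ | 1 ≤ s ∧ s ≤ M - 1 ∧
        N / ((s : ℝ) + (1 - p) / p) ≤ T} s₀ ∧
      (∀ s ∈ {s : ℕ | 1 ≤ s ∧ s ≤ M - 1 ∧
        N / ((s : ℝ) + (1 - p) / p) ≤ T}, Aage M p s₀ ≤ Aage M p s) ∧
      (s₀ : ℤ) = max 1 ⌈N / T - (1 - p) / p⌉ := by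
  classical
  set S := {s : ℕ | 1 ≤ s ∧ s ≤ M - 1 ∧ N / ((s : ℝ) + (1 - p) / p) ≤ T} with hS
  have hq : 0 < 1 - p := by linarith
  have hc0 : 0 < (1 - p) / p := div_pos hq hp
  have hs₀mem : sInf S ∈ S := Nat.sInf_mem hne
  obtain ⟨h1, h2, h3⟩ := hs₀mem
  have hleast : IsLeast S (sInf S) :=
    ⟨⟨h1, h2, h3⟩, fun s hsS => Nat.sInf_le hsS⟩
  -- every feasible u satisfies max 1 ⌈N/T − c⌉ ≤ u
  have hA : ∀ u : ℕ, u ∈ S → max 1 ⌈N / T - (1 - p) / p⌉ ≤ (u : ℤ) := by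
    intro u hu
    obtain ⟨hu1, hu2, hu3⟩ := hu
    have hu0 : (0:ℝ) < (u : ℝ) + (1 - p) / p := by
      have : (1:ℝ) ≤ (u : ℝ) := by exact_mod_cast hu1
      linarith
    have hN' : N ≤ T * ((u : ℝ) + (1 - p) / p) := (div_le_iff₀ hu0).mp hu3
    have hNT : N / T ≤ (u : ℝ) + (1 - p) / p := by
      rw [div_le_iff₀ hT]; nlinarith [hN']
    have hcl : ⌈N / T - (1 - p) / p⌉ ≤ (u : ℤ) := by
      apply Int.ceil_le.mpr
      push_cast
      linarith
    have h1u : (1:ℤ) ≤ (u : ℤ) := by exact_mod_cast hu1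
    exact max_le h1u hcl
  set m : ℤ := max 1 ⌈N / T - (1 - p) / p⌉ with hm
  have hm1 : (1:ℤ) ≤ m := le_max_left _ _
  have hmle : m ≤ ((sInf S : ℕ) : ℤ) := hA _ ⟨h1, h2, h3⟩
  have hmtoNat : ((m.toNat : ℤ)) = m := Int.toNat_of_nonneg (by linarith)
  have hmem : m.toNat ∈ S := by
    refine ⟨by omega, ?_, ?_⟩
    · have hcast : ((sInf S : ℕ) : ℤ) ≤ ((M - 1 : ℕ) : ℤ) := by exact_mod_cast h2
      omega
    · have hle1 : N / T - (1 - p) / p ≤ ((⌈N / T - (1 - p) / p⌉ : ℤ) : ℝ) :=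
        Int.le_ceil _
      have hle2 : ((⌈N / T - (1 - p) / p⌉ : ℤ) : ℝ) ≤ (m : ℝ) := by
        exact_mod_cast le_max_right (1:ℤ) ⌈N / T - (1 - p) / p⌉
      have hcast : ((m.toNat : ℕ) : ℝ) = (m : ℝ) := by exact_mod_cast hmtoNat
      have hm1R : (1:ℝ) ≤ (m : ℝ) := by exact_mod_cast hm1
      have hpos : (0:ℝ) < ((m.toNat : ℕ) : ℝ) + (1 - p) / p := by
        rw [hcast]; linarith
      rw [div_le_iff₀ hpos]
      have hNT : N / T ≤ ((m.toNat : ℕ) : ℝ) + (1 - p) / p := by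
        rw [hcast]; linarith
      rw [div_le_iff₀ hT] at hNT
      nlinarith [hNT]
  have hsle : sInf S ≤ m.toNat := Nat.sInf_le hmem
  refine ⟨sInf S, hleast, ?_, ?_⟩
  · intro s hsS
    exact Aage_mono M p hM hp hp1 (sInf S) s h1 (Nat.sInf_le hsS) hsS.2.1
  · omega
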